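/- For any two fully supported probability distributions P and Q on a finite alphabet X and any α ≥ 0, the Rényi divergence of order α/(1+α) upper bounds the generalized Jensen-Shannon divergence: D_{α/(1+α)}(Q‖P) ≥ GJS(P,Q,α). -/

import Mathlib

open Real Finset Filter

open scoped Classical

variable {X : Type*}

def IsProb [Fintype X] (P : X → ℝ) : Prop := (∀ x, 0 ≤ P x) ∧ ∑ x, P x = 1

noncomputable def KL [Fintype X] (P Q : X → ℝ) : ℝ := ∑ x, P x * Real.log (P x / Q x)

noncomputable def GJS [Fintype X] (P Q : X → ℝ) (α : ℝ) : ℝ :=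
  α * KL P (fun x => (α * P x + Q x) / (1 + α)) + KL Q (fun x => (α * P x + Q x) / (1 + α))

noncomputable def Renyi [Fintype X] (β : ℝ) (P Q : X → ℝ) : ℝ :=
  (1 / (β - 1)) * Real.log (∑ x, P x ^ β * Q x ^ (1 - β))

noncomputable def scoreG [Fintype X] {M : ℕ} (Q : Fin M → X → ℝ) (i : Fin M) : ℝ :=
  ∑ j ∈ Finset.univ.erase i,
    KL (Q j) (fun x => (∑ l ∈ Finset.univ.erase i, Q l x) / ((M : ℝ) - 1))

/-! ### Auxiliary one-variable analysis -/

private lemma amgm {β p q : ℝ} (hβ0 : 0 ≤ β) (hβ1 : β ≤ 1) (hp : 0 ≤ p) (hq : 0 ≤ q) :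
    p ^ β * q ^ (1 - β) ≤ β * p + (1 - β) * q :=
  Real.geom_mean_le_arith_mean2_weighted hβ0 (by linarith) hp hq (by ring)

/-- The auxiliary function whose nonpositivity is the pointwise key inequality. -/
noncomputable def fAux (β q p : ℝ) : ℝ :=
  β * p * (Real.log p - Real.log (β * p + (1 - β) * q))
    + (1 - β) * q * (Real.log q - Real.log (β * p + (1 - β) * q))
    + q ^ β * p ^ (1 - β) - (β * p + (1 - β) * q) - (1 - 2 * β) * (p - q)

/-- The derivative of `fAux β q`. -/
noncomputable def gAux (β q p : ℝ) : ℝ :=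
  β * (Real.log p - Real.log (β * p + (1 - β) * q)) + (1 - β) * q ^ β * p ^ (-β) - (1 - β)

private lemma m_pos {β q p : ℝ} (hβ0 : 0 ≤ β) (hβ1 : β < 1) (hq : 0 < q) (hp : 0 < p) :
    0 < β * p + (1 - β) * q := by
  have h1 : 0 ≤ β * p := mul_nonneg hβ0 hp.le
  have h2 : 0 < (1 - β) * q := mul_pos (by linarith) hq
  linarith

private lemma hasDerivAt_m {β q : ℝ} (p : ℝ) :
    HasDerivAt (fun x : ℝ => β * x + (1 - β) * q) β p := by
  simpa using ((hasDerivAt_id p).const_mul β).add_const ((1 - β) * q)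

private lemma hasDerivAt_gAux {β q p : ℝ} (hβ0 : 0 ≤ β) (hβ1 : β < 1) (hq : 0 < q)
    (hp : 0 < p) :
    HasDerivAt (gAux β q)
      (β * (p⁻¹ - β / (β * p + (1 - β) * q)) + (1 - β) * q ^ β * (-β * p ^ (-β - 1))) p := by
  have hm := m_pos hβ0 hβ1 hq hp
  have h1 : HasDerivAt (fun x : ℝ => β * (Real.log x - Real.log (β * x + (1 - β) * q)))
      (β * (p⁻¹ - β / (β * p + (1 - β) * q))) p :=
    ((Real.hasDerivAt_log hp.ne').sub ((hasDerivAt_m p).log hm.ne')).const_mul β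
  have h2 : HasDerivAt (fun x : ℝ => (1 - β) * q ^ β * x ^ (-β))
      ((1 - β) * q ^ β * (-β * p ^ (-β - 1))) p :=
    (Real.hasDerivAt_rpow_const (Or.inl hp.ne')).const_mul ((1 - β) * q ^ β)
  exact (h1.add h2).sub_const (1 - β)

private lemma gAux_deriv_nonpos {β q p : ℝ} (hβ0 : 0 ≤ β) (hβ1 : β < 1) (hq : 0 < q)
    (hp : 0 < p) :
    β * (p⁻¹ - β / (β * p + (1 - β) * q)) + (1 - β) * q ^ β * (-β * p ^ (-β - 1)) ≤ 0 := by
  set m := β * p + (1 - β) * q with hmdef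
  have hm : 0 < m := m_pos hβ0 hβ1 hq hp
  have hpβ : 0 < p ^ β := Real.rpow_pos_of_pos hp β
  have hqβ : 0 < q ^ β := Real.rpow_pos_of_pos hq β
  -- rewrite `p ^ (-β - 1)`
  have hpow : p ^ (-β - 1) = (p ^ β * p)⁻¹ := by
    rw [show -β - 1 = -(β + 1) by ring, Real.rpow_neg hp.le, Real.rpow_add hp, Real.rpow_one]
  -- AM-GM
  have hamgm : p ^ β * q ^ (1 - β) ≤ m := amgm hβ0 hβ1.le hp.le hq.le
  -- first summand equals β*(1-β)*q/(p*m)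
  have h1 : β * (p⁻¹ - β / m) = β * (1 - β) * q / (p * m) := by
    field_simp
    ring
  -- key comparison : q/(p*m) ≤ q^β * (p^β*p)⁻¹
  have hkey : q / (p * m) ≤ q ^ β * (p ^ β * p)⁻¹ := by
    rw [div_le_iff₀ (by positivity)]
    have hq' : q = q ^ β * q ^ (1 - β) := by
      rw [← Real.rpow_add hq]; norm_num
    calc q = q ^ β * q ^ (1 - β) := hq'
      _ ≤ q ^ β * (m / p ^ β) := by
          apply mul_le_mul_of_nonneg_left _ hqβ.le
          rw [le_div_iff₀ hpβ]
          calc q ^ (1 - β) * p ^ β = p ^ β * q ^ (1 - β) := by ring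
            _ ≤ m := hamgm
      _ = q ^ β * (p ^ β * p)⁻¹ * (p * m) := by
          field_simp
  have h2 : β * (1 - β) * (q / (p * m)) ≤ β * (1 - β) * (q ^ β * (p ^ β * p)⁻¹) :=
    mul_le_mul_of_nonneg_left hkey (by nlinarith)
  calc β * (p⁻¹ - β / m) + (1 - β) * q ^ β * (-β * p ^ (-β - 1))
      = β * (1 - β) * (q / (p * m)) - β * (1 - β) * (q ^ β * (p ^ β * p)⁻¹) := by
        rw [h1, hpow]; ring
    _ ≤ 0 := by linarith

private lemma gAux_antitoneOn {β q : ℝ} (hβ0 : 0 ≤ β) (hβ1 : β < 1) (hq : 0 < q) :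
    AntitoneOn (gAux β q) (Set.Ioi 0) := by
  apply antitoneOn_of_hasDerivWithinAt_nonpos (convex_Ioi 0)
    (f' := fun p => β * (p⁻¹ - β / (β * p + (1 - β) * q)) + (1 - β) * q ^ β * (-β * p ^ (-β - 1)))
  · intro p hp
    exact (hasDerivAt_gAux hβ0 hβ1 hq hp).continuousAt.continuousWithinAt
  · intro p hp
    rw [interior_Ioi] at hp
    exact (hasDerivAt_gAux hβ0 hβ1 hq hp).hasDerivWithinAt
  · intro p hp
    rw [interior_Ioi] at hp
    exact gAux_deriv_nonpos hβ0 hβ1 hq hp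

private lemma gAux_at_q {β q : ℝ} (hq : 0 < q) : gAux β q q = 0 := by
  have hm : β * q + (1 - β) * q = q := by ring
  have hqq : q ^ β * q ^ (-β) = 1 := by
    rw [← Real.rpow_add hq]; norm_num
  unfold gAux
  rw [hm]
  have h2 : (1 - β) * q ^ β * q ^ (-β) = (1 - β) * (q ^ β * q ^ (-β)) := by ring
  rw [h2, hqq]
  ring

private lemma hasDerivAt_fAux {β q p : ℝ} (hβ0 : 0 ≤ β) (hβ1 : β < 1) (hq : 0 < q)
    (hp : 0 < p) : HasDerivAt (fAux β q) (gAux β q p) p := by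
  have hm := m_pos hβ0 hβ1 hq hp
  have hL : HasDerivAt (fun x : ℝ => Real.log x - Real.log (β * x + (1 - β) * q))
      (p⁻¹ - β / (β * p + (1 - β) * q)) p :=
    (Real.hasDerivAt_log hp.ne').sub ((hasDerivAt_m p).log hm.ne')
  have h1 : HasDerivAt (fun x : ℝ => β * x * (Real.log x - Real.log (β * x + (1 - β) * q)))
      (β * (Real.log p - Real.log (β * p + (1 - β) * q))
        + β * p * (p⁻¹ - β / (β * p + (1 - β) * q))) p := by
    have := ((hasDerivAt_id p).const_mul β).mul hL
    simpa [Pi.mul_def, mul_comm, mul_assoc, mul_left_comm] using this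
  have h2 : HasDerivAt
      (fun x : ℝ => (1 - β) * q * (Real.log q - Real.log (β * x + (1 - β) * q)))
      ((1 - β) * q * (0 - β / (β * p + (1 - β) * q))) p :=
    (((hasDerivAt_const p (Real.log q)).sub ((hasDerivAt_m p).log hm.ne')).const_mul
      ((1 - β) * q))
  have h3 : HasDerivAt (fun x : ℝ => q ^ β * x ^ (1 - β))
      (q ^ β * ((1 - β) * p ^ (1 - β - 1))) p :=
    (Real.hasDerivAt_rpow_const (Or.inl hp.ne')).const_mul (q ^ β)
  have h5 : HasDerivAt (fun x : ℝ => (1 - 2 * β) * (x - q)) (1 - 2 * β) p := by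
    simpa using ((hasDerivAt_id p).sub_const q).const_mul (1 - 2 * β)
  have hm' : HasDerivAt (fun x : ℝ => β * x + (1 - β) * q) β p := hasDerivAt_m p
  have htot := (((h1.add h2).add h3).sub hm').sub h5
  have harr : fAux β q = fun x =>
      β * x * (Real.log x - Real.log (β * x + (1 - β) * q))
        + (1 - β) * q * (Real.log q - Real.log (β * x + (1 - β) * q))
        + q ^ β * x ^ (1 - β) - (β * x + (1 - β) * q) - (1 - 2 * β) * (x - q) := rfl
  rw [harr]
  refine HasDerivAt.congr_deriv htot ?_
  have hpow : p ^ (1 - β - 1) = p ^ (-β) := by norm_num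
  rw [hpow]
  unfold gAux
  field_simp
  ring

private lemma fAux_at_q {β q : ℝ} (hq : 0 < q) : fAux β q q = 0 := by
  have hm : β * q + (1 - β) * q = q := by ring
  have hqq : q ^ β * q ^ (1 - β) = q := by
    rw [← Real.rpow_add hq]; norm_num
  unfold fAux
  rw [hm, hqq]
  ring

/-- The key pointwise inequality. -/
private lemma fAux_nonpos {β q p : ℝ} (hβ0 : 0 ≤ β) (hβ1 : β < 1) (hq : 0 < q) (hp : 0 < p) :
    fAux β q p ≤ 0 := by
  have hgq : gAux β q q = 0 := gAux_at_q hq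
  rcases le_total q p with hqp | hpq
  · -- f antitone on [q, ∞)
    have hanti : AntitoneOn (fAux β q) (Set.Ici q) := by
      apply antitoneOn_of_hasDerivWithinAt_nonpos (convex_Ici q) (f' := gAux β q)
      · intro x hx
        have hx0 : 0 < x := lt_of_lt_of_le hq hx
        exact (hasDerivAt_fAux hβ0 hβ1 hq hx0).continuousAt.continuousWithinAt
      · intro x hx
        rw [interior_Ici] at hx
        have hx0 : 0 < x := lt_trans hq hx
        exact (hasDerivAt_fAux hβ0 hβ1 hq hx0).hasDerivWithinAt
      · intro x hx
        rw [interior_Ici] at hx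
        have hx0 : 0 < x := lt_trans hq hx
        calc gAux β q x ≤ gAux β q q :=
              gAux_antitoneOn hβ0 hβ1 hq hq hx0 (le_of_lt hx)
          _ = 0 := hgq
    calc fAux β q p ≤ fAux β q q := hanti (Set.self_mem_Ici) hqp hqp
      _ = 0 := fAux_at_q hq
  · -- f monotone on (0, q]
    have hmono : MonotoneOn (fAux β q) (Set.Ioc 0 q) := by
      apply monotoneOn_of_hasDerivWithinAt_nonneg (convex_Ioc 0 q) (f' := gAux β q)
      · intro x hx
        exact (hasDerivAt_fAux hβ0 hβ1 hq hx.1).continuousAt.continuousWithinAt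
      · intro x hx
        rw [interior_Ioc] at hx
        exact (hasDerivAt_fAux hβ0 hβ1 hq hx.1).hasDerivWithinAt
      · intro x hx
        rw [interior_Ioc] at hx
        have : gAux β q q ≤ gAux β q x :=
          gAux_antitoneOn hβ0 hβ1 hq hx.1 hq (le_of_lt hx.2)
        linarith [this, hgq]
    calc fAux β q p ≤ fAux β q q :=
          hmono ⟨hp, hpq⟩ ⟨hq, le_refl q⟩ hpq
      _ = 0 := fAux_at_q hq

theorem renyi_ge_gjs [Fintype X] (P Q : X → ℝ) (hP : IsProb P) (hQ : IsProb Q)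
    (hPpos : ∀ x, 0 < P x) (hQpos : ∀ x, 0 < Q x) (α : ℝ) (hα : 0 ≤ α) :
    GJS P Q α ≤ Renyi (α / (1 + α)) Q P := by
  have h1α : (0:ℝ) < 1 + α := by linarith
  set β := α / (1 + α) with hβdef
  have hβ0 : 0 ≤ β := div_nonneg hα h1α.le
  have hβ1 : β < 1 := by
    rw [hβdef, div_lt_one h1α]; linarith
  -- the mixture
  have hMeq : ∀ x, (α * P x + Q x) / (1 + α) = β * P x + (1 - β) * Q x := by
    intro x
    rw [hβdef]
    field_simp
    ring
  have hMpos : ∀ x, 0 < β * P x + (1 - β) * Q x := fun x =>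
    m_pos hβ0 hβ1 (hQpos x) (hPpos x)
  set S := ∑ x, Q x ^ β * P x ^ (1 - β) with hSdef
  have hSpos : 0 < S := by
    apply Finset.sum_pos
    · intro x _
      exact mul_pos (Real.rpow_pos_of_pos (hQpos x) β) (Real.rpow_pos_of_pos (hPpos x) (1 - β))
    · by_contra h
      rw [Finset.not_nonempty_iff_eq_empty] at h
      have := hP.2
      rw [h] at this
      simp at this
  set T := ∑ x, (β * P x * Real.log (P x / (β * P x + (1 - β) * Q x))
    + (1 - β) * Q x * Real.log (Q x / (β * P x + (1 - β) * Q x))) with hTdef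
  -- key summed inequality : T + S ≤ 1
  have hTS : T + S ≤ 1 := by
    have hpt : ∀ x : X,
        β * P x * Real.log (P x / (β * P x + (1 - β) * Q x))
          + (1 - β) * Q x * Real.log (Q x / (β * P x + (1 - β) * Q x))
          + Q x ^ β * P x ^ (1 - β)
        ≤ (β * P x + (1 - β) * Q x) + (1 - 2 * β) * (P x - Q x) := by
      intro x
      have hf := fAux_nonpos hβ0 hβ1 (hQpos x) (hPpos x)
      unfold fAux at hf
      rw [Real.log_div (hPpos x).ne' (hMpos x).ne', Real.log_div (hQpos x).ne' (hMpos x).ne']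
      linarith
    have hsum := Finset.sum_le_sum (s := Finset.univ) (fun x _ => hpt x)
    have hL : ∑ x, (β * P x * Real.log (P x / (β * P x + (1 - β) * Q x))
        + (1 - β) * Q x * Real.log (Q x / (β * P x + (1 - β) * Q x))
        + Q x ^ β * P x ^ (1 - β)) = T + S := by
      rw [hTdef, hSdef, ← Finset.sum_add_distrib]
    have hR : ∑ x, ((β * P x + (1 - β) * Q x) + (1 - 2 * β) * (P x - Q x)) = 1 := by
      have : ∀ x, (β * P x + (1 - β) * Q x) + (1 - 2 * β) * (P x - Q x)
          = (1 - β) * P x + β * Q x := by intro x; ring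
      simp only [this]
      rw [Finset.sum_add_distrib, ← Finset.mul_sum, ← Finset.mul_sum, hP.2, hQ.2]
      ring
    rw [hL, hR] at hsum
    exact hsum
  -- T ≤ - log S
  have hlogS : Real.log S ≤ S - 1 := Real.log_le_sub_one_of_pos hSpos
  have hT : T ≤ -Real.log S := by linarith
  -- identify GJS with (1+α) * T
  have hGJS : GJS P Q α = (1 + α) * T := by
    unfold GJS KL
    rw [hTdef, Finset.mul_sum, Finset.mul_sum, ← Finset.sum_add_distrib]
    apply Finset.sum_congr rfl
    intro x _
    simp only [hMeq]
    have hb1 : (1 + α) * β = α := by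
      rw [hβdef]; field_simp
    have hb2 : (1 + α) * (1 - β) = 1 := by
      rw [hβdef]; field_simp; ring
    calc α * (P x * Real.log (P x / (β * P x + (1 - β) * Q x)))
          + Q x * Real.log (Q x / (β * P x + (1 - β) * Q x))
        = ((1 + α) * β) * (P x * Real.log (P x / (β * P x + (1 - β) * Q x)))
          + ((1 + α) * (1 - β)) * (Q x * Real.log (Q x / (β * P x + (1 - β) * Q x))) := by
            rw [hb1, hb2]; ring
      _ = (1 + α) * (β * P x * Real.log (P x / (β * P x + (1 - β) * Q x))
          + (1 - β) * Q x * Real.log (Q x / (β * P x + (1 - β) * Q x))) := by ring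
  -- identify Renyi with -(1+α) * log S
  have hRenyi : Renyi (α / (1 + α)) Q P = (1 + α) * (-Real.log S) := by
    unfold Renyi
    rw [← hβdef, ← hSdef]
    have : 1 / (β - 1) = -(1 + α) := by
      rw [hβdef]
      have : α / (1 + α) - 1 = -(1 / (1 + α)) := by field_simp; ring
      rw [this]
      field_simp
    rw [this]
    ring
  rw [hGJS, hRenyi]
  exact mul_le_mul_of_nonneg_left hT h1α.le
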